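/- If Q is a positive query, J is an instance, h is a homomorphism from J to an instance J' that is injective on the active domain of J and the identity on all constants appearing in Q and in a tuple t, then t ∈ Q(J) if and only if h(t) ∈ Q(h(J)); in particular, evaluating a positive query is invariant under renaming nulls of J to fresh distinct constants not occurring in Q or t. -/
import Mathlib



namespace DE

abbrev Var := ℕ

inductive Term (C : Type) where
  | const : C → Term C
  | null : ℕ → Term C

structure Atom (R C : Type) where
  rel : R
  args : List (Var ⊕ C)

structure Fact (R C : Type) where
  rel : R
  args : List (Term C)

abbrev Instance (R C : Type) := Set (Fact R C)

def termOf {C : Type} (h : Var → Term C) : Var ⊕ C → Term C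
  | Sum.inl v => h v
  | Sum.inr c => Term.const c

def applyAtom {R C : Type} (h : Var → Term C) (a : Atom R C) : Fact R C :=
  ⟨a.rel, a.args.map (termOf h)⟩

/-- `h` maps every atom of `as` into the instance `I`. -/
def holdsBody {R C : Type} (I : Instance R C) (h : Var → Term C)
    (as : List (Atom R C)) : Prop :=
  ∀ a ∈ as, applyAtom h a ∈ I

/-- A tuple-generating dependency. -/
structure TGD (R C : Type) where
  body : List (Atom R C)
  head : List (Atom R C)
  frontier : List Var
  exvars : List Var

def varsOf {R C : Type} (as : List (Atom R C)) : Set Var :=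
  {v | ∃ a ∈ as, (Sum.inl v : Var ⊕ C) ∈ a.args}

/-- Well-formedness of a TGD: frontier variables occur in the body, existential
variables do not, and every head variable is a frontier or existential variable. -/
def TGD.wf {R C : Type} (ρ : TGD R C) : Prop :=
  (∀ v ∈ ρ.frontier, v ∈ varsOf ρ.body) ∧
  (∀ z ∈ ρ.exvars, z ∉ varsOf ρ.body) ∧
  (∀ v ∈ varsOf ρ.head, v ∈ ρ.frontier ∨ v ∈ ρ.exvars)

/-- Satisfaction of a TGD by an instance. -/
def satTGD {R C : Type} (I : Instance R C) (ρ : TGD R C) : Prop :=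
  ∀ h : Var → Term C, holdsBody I h ρ.body →
    ∃ h' : Var → Term C, (∀ v ∈ varsOf ρ.body, h' v = h v) ∧ holdsBody I h' ρ.head

/-- An equality-generating dependency. -/
structure EGD (R C : Type) where
  body : List (Atom R C)
  lhs : Var
  rhs : Var

def satEGD {R C : Type} (I : Instance R C) (η : EGD R C) : Prop :=
  ∀ h : Var → Term C, holdsBody I h η.body → h η.lhs = h η.rhs

/-- An ex-choice: given a TGD and a tuple of constants for its frontier,
a constant for each existential variable. -/
abbrev ExChoice (R C : Type) := TGD R C → List C → Var → C

def constHom {C : Type} (h : Var → C) : Var → Term C := fun v => Term.const (h v)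

/-- `I` satisfies all ground versions of the TGD `ρ` that are coherent with `γ`. -/
def satTGDcoh {R C : Type} (I : Instance R C) (γ : ExChoice R C) (ρ : TGD R C) : Prop :=
  ∀ h : Var → C, (∀ z ∈ ρ.exvars, h z = γ ρ (ρ.frontier.map h) z) →
    holdsBody I (constHom h) ρ.body → holdsBody I (constHom h) ρ.head

/-- A data exchange setting: source-to-target TGDs, target TGDs, target EGDs. -/
structure Setting (R C : Type) where
  sigmaST : List (TGD R C)
  sigmaT : List (TGD R C)
  sigmaE : List (EGD R C)

def Setting.wf {R C : Type} (S : Setting R C) : Prop :=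
  ∀ ρ ∈ S.sigmaST ++ S.sigmaT, ρ.wf

/-- Classical solution: `I ∪ J` satisfies `Σst` and `J` satisfies `Σt`. -/
def classicalSolution {R C : Type} (S : Setting R C) (I J : Instance R C) : Prop :=
  J.Finite ∧ (∀ ρ ∈ S.sigmaST, satTGD (I ∪ J) ρ) ∧
    (∀ ρ ∈ S.sigmaT, satTGD J ρ) ∧ (∀ η ∈ S.sigmaE, satEGD J η)

def supportedWith {R C : Type} (S : Setting R C) (γ : ExChoice R C)
    (I J : Instance R C) : Prop :=
  (∀ ρ ∈ S.sigmaST, satTGDcoh (I ∪ J) γ ρ) ∧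
    (∀ ρ ∈ S.sigmaT, satTGDcoh J γ ρ) ∧ (∀ η ∈ S.sigmaE, satEGD J η)

/-- Supported solution: for some ex-choice `γ`, `I ∪ J` satisfies `Σst^γ`,
`J` satisfies `Σt^γ`, and no proper subset of `J` does. -/
def supportedSolution {R C : Type} (S : Setting R C) (I J : Instance R C) : Prop :=
  J.Finite ∧ ∃ γ : ExChoice R C, supportedWith S γ I J ∧
    ∀ J' : Instance R C, J' ⊂ J → ¬ supportedWith S γ I J'

/-- An instance without labeled nulls (a database). -/
def nullFree {R C : Type} (I : Instance R C) : Prop :=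
  ∀ f ∈ I, ∀ t ∈ f.args, ∃ c : C, t = Term.const c

end DE

namespace DE

/-- A conjunctive query with body atoms and a tuple of free variables. -/
structure CQ (R C : Type) where
  body : List (Atom R C)
  free : List Var

def CQ.safe {R C : Type} (q : CQ R C) : Prop := ∀ v ∈ q.free, v ∈ varsOf q.body

def evalCQ {R C : Type} (q : CQ R C) (J : Instance R C) : Set (List (Term C)) :=
  {t | ∃ h : Var → Term C, holdsBody J h q.body ∧ t = q.free.map h}

/-- Output of a union of conjunctive queries (positive query). -/
def evalUCQ {R C : Type} (Q : List (CQ R C)) (J : Instance R C) : Set (List (Term C)) :=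
  {t | ∃ q ∈ Q, t ∈ evalCQ q J}

/-- Classical certain answers. -/
def cert {R C : Type} (S : Setting R C) (I : Instance R C) (Q : List (CQ R C)) :
    Set (List (Term C)) :=
  {t | ∀ J, classicalSolution S I J → t ∈ evalUCQ Q J}

/-- Supported certain answers. -/
def scert {R C : Type} (S : Setting R C) (I : Instance R C) (Q : List (CQ R C)) :
    Set (List (Term C)) :=
  {t | ∀ J, supportedSolution S I J → t ∈ evalUCQ Q J}

end DE

namespace DE

def constsOfAtoms {R C : Type} (as : List (Atom R C)) : Set C :=
  {c | ∃ a ∈ as, (Sum.inr c : Var ⊕ C) ∈ a.args}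

def constsOfTGD {R C : Type} (ρ : TGD R C) : Set C :=
  constsOfAtoms ρ.body ∪ constsOfAtoms ρ.head

def constsOfEGD {R C : Type} (η : EGD R C) : Set C := constsOfAtoms η.body

def constsOfSetting {R C : Type} (S : Setting R C) : Set C :=
  {c | ∃ ρ ∈ S.sigmaST ++ S.sigmaT, c ∈ constsOfTGD ρ} ∪
    {c | ∃ η ∈ S.sigmaE, c ∈ constsOfEGD η}

def constsOfInstance {R C : Type} (I : Instance R C) : Set C :=
  {c | ∃ f ∈ I, Term.const c ∈ f.args}

/-- Replace each labeled null by a constant according to `r`. -/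
def renameTerm {C : Type} (r : ℕ → C) : Term C → Term C
  | Term.null n => Term.const (r n)
  | Term.const c => Term.const c

def renameFact {R C : Type} (r : ℕ → C) (f : Fact R C) : Fact R C :=
  ⟨f.rel, f.args.map (renameTerm r)⟩

/-- Active domain of an instance. -/
def adom {R C : Type} (J : Instance R C) : Set (Term C) := {t | ∃ f ∈ J, t ∈ f.args}

def mapFact {R C : Type} (h : Term C → Term C) (f : Fact R C) : Fact R C :=
  ⟨f.rel, f.args.map h⟩

end DE

private lemma listMapInjOn {α β : Type} (h : α → β) (D : Set α)
    (hinj : Set.InjOn h D) :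
    ∀ l1 l2 : List α, (∀ x ∈ l1, x ∈ D) → (∀ x ∈ l2, x ∈ D) →
      l1.map h = l2.map h → l1 = l2 := by
  intro l1
  induction l1 with
  | nil => intro l2 _ _ e; cases l2 <;> simp_all
  | cons a l ih =>
    intro l2 h1 h2 e
    cases l2 with
    | nil => simp_all
    | cons b l2 =>
      simp only [List.map_cons, List.cons.injEq] at e
      have := hinj (h1 a (by simp)) (h2 b (by simp)) e.1
      have := ih l2 (fun x hx => h1 x (by simp [hx])) (fun x hx => h2 x (by simp [hx])) e.2
      simp_all

/-- evaluation of a positive query is invariant under a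
homomorphism that is the identity on constants and injective on the active
domain (in particular, under renaming nulls to fresh distinct constants). -/
theorem positive_query_hom_invariant {R C : Type} (Q : List (DE.CQ R C))
    (hQ : ∀ q ∈ Q, q.safe) (J : DE.Instance R C)
    (h : DE.Term C → DE.Term C)
    (hconst : ∀ c : C, h (DE.Term.const c) = DE.Term.const c)
    (hinj : Set.InjOn h (DE.adom J ∪ Set.range (DE.Term.const : C → DE.Term C)))
    (t : List C) :
    t.map DE.Term.const ∈ DE.evalUCQ Q J ↔
      (t.map DE.Term.const).map h ∈ DE.evalUCQ Q (DE.mapFact h '' J) := by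
  set D := DE.adom J ∪ Set.range (DE.Term.const : C → DE.Term C) with hD
  constructor
  · rintro ⟨q, hq, g, hgbody, hgt⟩
    refine ⟨q, hq, fun v => h (g v), ?_, ?_⟩
    · intro a ha
      refine ⟨DE.applyAtom g a, hgbody a ha, ?_⟩
      simp only [DE.mapFact, DE.applyAtom, List.map_map]
      congr 1
      apply List.map_congr_left
      rintro (v | c) _ <;> simp [DE.termOf, hconst]
    · rw [hgt, List.map_map]; rfl
  · rintro ⟨q, hq, g', hgbody, hgt⟩
    classical
    set g : DE.Var → DE.Term C := fun v =>
      if hv : ∃ s, s ∈ DE.adom J ∧ h s = g' v then hv.choose else DE.Term.null 0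
      with hgdef
    -- key property of g on variables of the body
    have hg : ∀ v ∈ DE.varsOf q.body, g v ∈ DE.adom J ∧ h (g v) = g' v := by
      rintro v ⟨a, ha, hva⟩
      obtain ⟨f, hfJ, hf⟩ := hgbody a ha
      have hargs : f.args.map h = a.args.map (DE.termOf g') := by
        have := congrArg DE.Fact.args hf
        simpa [DE.mapFact, DE.applyAtom] using this
      have hmem : g' v ∈ f.args.map h := by
        rw [hargs]
        exact List.mem_map.mpr ⟨Sum.inl v, hva, rfl⟩
      obtain ⟨s, hs, hsv⟩ := List.mem_map.mp hmem
      have hex : ∃ s, s ∈ DE.adom J ∧ h s = g' v := ⟨s, ⟨f, hfJ, hs⟩, hsv⟩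
      have : g v = hex.choose := by simp [hgdef, hex]
      rw [this]
      exact hex.choose_spec
    refine ⟨q, hq, g, ?_, ?_⟩
    · -- holdsBody J g q.body
      intro a ha
      obtain ⟨f, hfJ, hf⟩ := hgbody a ha
      have hargs : f.args.map h = a.args.map (DE.termOf g') := by
        have := congrArg DE.Fact.args hf
        simpa [DE.mapFact, DE.applyAtom] using this
      have hrel : f.rel = a.rel := by
        have := congrArg DE.Fact.rel hf
        simpa [DE.mapFact, DE.applyAtom] using this
      have heq : a.args.map (DE.termOf g) = f.args := by
        apply listMapInjOn h D hinj
        · rintro x hx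
          obtain ⟨y, hy, rfl⟩ := List.mem_map.mp hx
          cases y with
          | inl v =>
            exact Or.inl (hg v ⟨a, ha, hy⟩).1
          | inr c => exact Or.inr ⟨c, rfl⟩
        · intro x hx
          exact Or.inl ⟨f, hfJ, hx⟩
        · rw [List.map_map, hargs]
          apply List.map_congr_left
          rintro (v | c) hy
          · exact (hg v ⟨a, ha, hy⟩).2
          · simpa [DE.termOf] using hconst c
      have : DE.applyAtom g a = f := by
        cases f
        simp_all [DE.applyAtom]
      rw [this]; exact hfJ
    · -- t.map const = q.free.map g
      apply listMapInjOn h D hinj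
      · intro x hx
        obtain ⟨c, _, rfl⟩ := List.mem_map.mp hx
        exact Or.inr ⟨c, rfl⟩
      · intro x hx
        obtain ⟨v, hv, rfl⟩ := List.mem_map.mp hx
        exact Or.inl (hg v (hQ q hq v hv)).1
      · rw [hgt, List.map_map]
        apply List.map_congr_left
        intro v hv
        exact ((hg v (hQ q hq v hv)).2).symm
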